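/- Resilient estimation error bound: let 𝒳 ⊆ ℝⁿ, and for each block index i in a finite index set I of size p − q let Φᵢ : 𝒳 → ℝ^{nᵢ}. Let Ψ^I : ℝ^{N_I} → 𝒳 be a left inverse of the stacked map Φ_I = (Φᵢ)_{i∈I}, and suppose id − Φ_I∘Ψ^I is L-Lipschitz (sup-norm). Suppose ẑ_I = Φ_I(x) + e_I + r_I where x ∈ 𝒳, ‖r_I‖∞ ≤ δ, and the block vector e_I is q-sparse. Assume that for every J ⊆ I with |J| = p − 2q, the stacked map Φ_J is lower-Lipschitz on 𝒳 with constant ℓ_J > 0, and let ℓ := min over such J of ℓ_J. If ‖ẑ_I − Φ_I(Ψ^I(ẑ_I))‖∞ ≤ L·δ, then ‖Ψ^I(ẑ_I) − x‖∞ ≤ (L + 1)·δ / ℓ. -/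

import Mathlib

/-- Resilient estimation error bound: if the residual test passes
(`‖ẑ_I − Φ_I(Ψ^I ẑ_I)‖∞ ≤ L·δ`), the attack `e` is `q`-sparse, and every sub-stack
`Φ_J` over `J` of size `p − 2q` is lower-Lipschitz with constant `ℓ > 0`, then the
estimate `Ψ^I(ẑ_I)` is within `(L+1)δ/ℓ` of the true state. -/
theorem resilient_estimation_error_bound
    {d p q : ℕ} {ι : Type*} [Fintype ι] [DecidableEq ι]
    (hcard : Fintype.card ι = p - q)
    (n : ι → ℕ) (𝒳 : Set (Fin d → ℝ))
    (Φb : (i : ι) → (Fin d → ℝ) → (Fin (n i) → ℝ))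
    (Ψ : ((i : ι) → Fin (n i) → ℝ) → (Fin d → ℝ))
    (hΨmem : ∀ z, Ψ z ∈ 𝒳)
    (hleft : ∀ x ∈ 𝒳, Ψ (fun i => Φb i x) = x)
    (L δ ℓ : ℝ) (hδ : 0 ≤ δ) (hℓ : 0 < ℓ)
    (hlip : ∀ z z' : (i : ι) → Fin (n i) → ℝ,
      ‖(z - fun i => Φb i (Ψ z)) - (z' - fun i => Φb i (Ψ z'))‖ ≤ L * ‖z - z'‖)
    (hlow : ∀ J : Finset ι, J.card = p - 2 * q →
      ∀ x₁ ∈ 𝒳, ∀ x₂ ∈ 𝒳,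
        ℓ * ‖x₁ - x₂‖ ≤ ((J.sup fun j => ‖Φb j x₁ - Φb j x₂‖₊ : NNReal) : ℝ))
    (x : Fin d → ℝ) (hx : x ∈ 𝒳)
    (e r zhat : (i : ι) → Fin (n i) → ℝ)
    (hr : ‖r‖ ≤ δ)
    (hsparse : (Finset.univ.filter (fun i : ι => e i ≠ 0)).card ≤ q)
    (hz : zhat = (fun i => Φb i x) + e + r)
    (hres : ‖zhat - fun i => Φb i (Ψ zhat)‖ ≤ L * δ) :
    ‖Ψ zhat - x‖ ≤ (L + 1) * δ / ℓ := by

  have hLδ : (0:ℝ) ≤ L * δ := le_trans (norm_nonneg _) hres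
  have hC : (0:ℝ) ≤ (L + 1) * δ := by nlinarith
  set S := Finset.univ.filter (fun i : ι => e i ≠ 0) with hS
  have hcomp : p - 2 * q ≤ Sᶜ.card := by
    have h1 := Finset.card_compl S
    omega
  obtain ⟨J, hJsub, hJcard⟩ := Finset.exists_subset_card_eq (s := Sᶜ) (n := p - 2 * q) hcomp
  have key : ∀ j ∈ J, ‖Φb j (Ψ zhat) - Φb j x‖ ≤ (L + 1) * δ := by
    intro j hj
    have hej : e j = 0 := by
      have hmem := hJsub hj
      simp only [hS, Finset.mem_compl, Finset.mem_filter, Finset.mem_univ, true_and,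
        not_not] at hmem
      exact hmem
    have hzj : zhat j = Φb j x + r j := by
      rw [hz]; simp [hej]
    have h1 : ‖zhat j - Φb j (Ψ zhat)‖ ≤ L * δ := by
      have := norm_le_pi_norm (zhat - fun i => Φb i (Ψ zhat)) j
      simpa using le_trans this hres
    have h2 : ‖r j‖ ≤ δ := le_trans (norm_le_pi_norm r j) hr
    calc ‖Φb j (Ψ zhat) - Φb j x‖ = ‖(Φb j (Ψ zhat) - zhat j) + r j‖ := by
          rw [hzj]; congr 1; abel
      _ ≤ ‖Φb j (Ψ zhat) - zhat j‖ + ‖r j‖ := norm_add_le _ _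
      _ = ‖zhat j - Φb j (Ψ zhat)‖ + ‖r j‖ := by rw [norm_sub_rev]
      _ ≤ L * δ + δ := add_le_add h1 h2
      _ = (L + 1) * δ := by ring
  have hsup : ((J.sup fun j => ‖Φb j (Ψ zhat) - Φb j x‖₊ : NNReal) : ℝ) ≤ (L + 1) * δ := by
    have h : J.sup (fun j => ‖Φb j (Ψ zhat) - Φb j x‖₊) ≤ ⟨(L + 1) * δ, hC⟩ :=
      Finset.sup_le fun j hj => by
        have := key j hj
        exact_mod_cast this
    exact_mod_cast h
  have hmain := hlow J hJcard (Ψ zhat) (hΨmem zhat) x hx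
  have hfin : ℓ * ‖Ψ zhat - x‖ ≤ (L + 1) * δ := le_trans hmain hsup
  rw [le_div_iff₀ hℓ]
  linarith
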